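/- Suppose h₀ ∈ H and there exists k ∈ H with (I − P∘R∘P∘R)k = h₀. Then the partial sums ∑_{i=0}^{n} (P∘R∘P∘R)^i h₀ of the scattering control Neumann series converge in H as n → ∞. -/

import Mathlib

open Filter

section Aux

open ContinuousLinearMap
open scoped InnerProductSpace

variable {H : Type*} [NormedAddCommGroup H] [InnerProductSpace ℂ H] [CompleteSpace H]

/-- Norm bound for a self-adjoint idempotent. -/
lemma proj_norm_le (P : H →L[ℂ] H) (hP : ContinuousLinearMap.adjoint P = P)
    (hP2 : ∀ x, P (P x) = P x) (x : H) : ‖P x‖ ≤ ‖x‖ := by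
  rcases eq_or_lt_of_le (norm_nonneg (P x)) with h0 | h0
  · rw [← h0]; exact norm_nonneg x
  · have key : (inner ℂ (P x) (P x) : ℂ) = inner ℂ x (P x) := by
      calc (inner ℂ (P x) (P x) : ℂ)
          = inner ℂ ((ContinuousLinearMap.adjoint P) x) (P x) := by rw [hP]
        _ = inner ℂ x (P (P x)) := ContinuousLinearMap.adjoint_inner_left P (P x) x
        _ = inner ℂ x (P x) := by rw [hP2]
    have h1 : ‖P x‖ ^ 2 = RCLike.re (inner ℂ (P x) (P x) : ℂ) := by
      rw [← @inner_self_eq_norm_sq ℂ]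
    have h2 : RCLike.re (inner ℂ x (P x) : ℂ) ≤ ‖x‖ * ‖P x‖ := by
      calc RCLike.re (inner ℂ x (P x) : ℂ) ≤ ‖(inner ℂ x (P x) : ℂ)‖ := RCLike.re_le_norm _
        _ ≤ ‖x‖ * ‖P x‖ := norm_inner_le_norm x (P x)
    have : ‖P x‖ * ‖P x‖ ≤ ‖x‖ * ‖P x‖ := by
      rw [← sq] at *
      rw [h1, key]; exact h2
    exact le_of_mul_le_mul_right this h0

/-- Key convergence lemma: for a contraction `B`, the powers of `S = B† B` applied
to any vector converge. -/
lemma key (B : H →L[ℂ] H) (hB : ∀ x, ‖B x‖ ≤ ‖x‖)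
    (hB' : ∀ x, ‖ContinuousLinearMap.adjoint B x‖ ≤ ‖x‖) (y : H) :
    ∃ l, Tendsto (fun n : ℕ => ((ContinuousLinearMap.adjoint B ∘L B) ^ n) y)
      atTop (nhds l) := by
  set S : H →L[ℂ] H := ContinuousLinearMap.adjoint B ∘L B with hSdef
  have hSadj : ContinuousLinearMap.adjoint S = S := by
    rw [hSdef, ContinuousLinearMap.adjoint_comp, ContinuousLinearMap.adjoint_adjoint]
  have hS : IsSelfAdjoint S := ContinuousLinearMap.isSelfAdjoint_iff'.mpr hSadj
  have hSpow : ∀ n : ℕ, ContinuousLinearMap.adjoint (S ^ n) = S ^ n :=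
    fun n => ContinuousLinearMap.isSelfAdjoint_iff'.mp (hS.pow n)
  -- split lemma
  have hsplit : ∀ n m : ℕ, (inner ℂ ((S ^ (n + m)) y) y : ℂ) = inner ℂ ((S ^ m) y) ((S ^ n) y) := by
    intro n m
    have h1 : (S ^ (n + m)) y = (S ^ n) ((S ^ m) y) := by
      rw [pow_add]; rfl
    calc (inner ℂ ((S ^ (n + m)) y) y : ℂ)
        = inner ℂ ((S ^ n) ((S ^ m) y)) y := by rw [h1]
      _ = inner ℂ ((ContinuousLinearMap.adjoint (S ^ n)) ((S ^ m) y)) y := by rw [hSpow]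
      _ = inner ℂ ((S ^ m) y) ((S ^ n) y) :=
          ContinuousLinearMap.adjoint_inner_left (S ^ n) y ((S ^ m) y)
  set c : ℕ → ℝ := fun j => RCLike.re (inner ℂ ((S ^ j) y) y : ℂ) with hc
  have ceven : ∀ j : ℕ, c (2 * j) = ‖(S ^ j) y‖ ^ 2 := by
    intro j
    have : 2 * j = j + j := by ring
    rw [hc]; simp only [this, hsplit j j]
    rw [@inner_self_eq_norm_sq ℂ]
  have codd : ∀ j : ℕ, c (2 * j + 1) = ‖B ((S ^ j) y)‖ ^ 2 := by
    intro j
    have h2 : 2 * j + 1 = (j + 1) + j := by ring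
    rw [hc]; simp only [h2, hsplit (j+1) j]
    have h3 : (S ^ (j + 1)) y = S ((S ^ j) y) := by
      rw [pow_succ']; rfl
    rw [h3, hSdef, ContinuousLinearMap.comp_apply,
      ContinuousLinearMap.adjoint_inner_right]
    rw [@inner_self_eq_norm_sq ℂ]
  have hnonneg : ∀ j, 0 ≤ c j := by
    intro j
    rcases Nat.even_or_odd j with ⟨m, hm⟩ | ⟨m, hm⟩
    · have : j = 2 * m := by omega
      rw [this, ceven]; positivity
    · rw [hm, codd]; positivity
  have hstep : ∀ j, c (j + 1) ≤ c j := by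
    intro j
    rcases Nat.even_or_odd j with ⟨m, hm⟩ | ⟨m, hm⟩
    · have h : j = 2 * m := by omega
      rw [h, codd, ceven]
      exact pow_le_pow_left₀ (norm_nonneg _) (hB _) 2
    · have h1 : 2 * m + 1 + 1 = 2 * (m + 1) := by omega
      rw [hm, h1, ceven, codd]
      have h3 : (S ^ (m + 1)) y = S ((S ^ m) y) := by
        rw [pow_succ']; rfl
      rw [h3, hSdef, ContinuousLinearMap.comp_apply]
      exact pow_le_pow_left₀ (norm_nonneg _) (hB' _) 2
  have hanti : Antitone c := antitone_nat_of_succ_le hstep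
  have hbdd : BddBelow (Set.range c) := ⟨0, by rintro x ⟨j, rfl⟩; exact hnonneg j⟩
  set L : ℝ := ⨅ j, c j with hL
  have hLtend : Tendsto c atTop (nhds L) := tendsto_atTop_ciInf hanti hbdd
  have hLle : ∀ j, L ≤ c j := fun j => ciInf_le hbdd j
  -- the norm-squared identity
  have hnorm : ∀ n m : ℕ, ‖(S ^ n) y - (S ^ m) y‖ ^ 2 = c (2*n) - 2 * c (n + m) + c (2*m) := by
    intro n m
    have h1 : ‖(S ^ n) y - (S ^ m) y‖ ^ 2
        = ‖(S ^ n) y‖ ^ 2 - 2 * RCLike.re (inner ℂ ((S ^ n) y) ((S ^ m) y) : ℂ)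
          + ‖(S ^ m) y‖ ^ 2 := @norm_sub_sq ℂ _ _ _ _ _ _
    have h2 : RCLike.re (inner ℂ ((S ^ n) y) ((S ^ m) y) : ℂ) = c (n + m) := by
      have : c (n + m) = RCLike.re (inner ℂ ((S ^ (n + m)) y) y : ℂ) := rfl
      rw [this, hsplit n m, inner_re_symm]
    rw [h1, h2, ← ceven n, ← ceven m]
  -- Cauchy
  have hcauchy : CauchySeq (fun n : ℕ => (S ^ n) y) := by
    rw [Metric.cauchySeq_iff']
    intro ε hε
    have hε2 : (0:ℝ) < ε ^ 2 / 4 := by positivity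
    have : ∀ᶠ j in atTop, c j < L + ε ^ 2 / 4 :=
      hLtend.eventually (eventually_lt_nhds (by linarith))
    obtain ⟨N, hN⟩ := eventually_atTop.mp this
    refine ⟨N, fun n hn => ?_⟩
    have hNlt : c N < L + ε ^ 2 / 4 := hN N le_rfl
    have hb1 : c (2 * n) ≤ c N := hanti (by omega)
    have hb2 : c (2 * N) ≤ c N := hanti (by omega)
    have hb3 : L ≤ c (n + N) := hLle _
    have hsq : ‖(S ^ n) y - (S ^ N) y‖ ^ 2 < ε ^ 2 := by
      rw [hnorm n N]; nlinarith
    have := lt_of_pow_lt_pow_left₀ 2 (le_of_lt hε) hsq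
    rwa [dist_eq_norm]
  exact cauchySeq_tendsto_of_complete hcauchy

end Aux

/-- If the scattering control equation `(I − P∘R∘P∘R) k = h₀` has a
solution `k ∈ H`, then the partial sums of the scattering control Neumann series
`∑_{i=0}^{n} (P∘R∘P∘R)^i h₀` converge in `H`. -/
theorem stmt1 {H : Type*} [NormedAddCommGroup H] [InnerProductSpace ℂ H] [CompleteSpace H]
    (R P : H →L[ℂ] H)
    (hR : IsSelfAdjoint R) (hR2 : R ∘L R = 1)
    (hP : IsSelfAdjoint P) (hP2 : P ∘L P = P)
    (h₀ k : H) (hk : ((1 : H →L[ℂ] H) - P ∘L R ∘L P ∘L R) k = h₀) :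
    ∃ l : H,
      Tendsto (fun n : ℕ => ∑ i ∈ Finset.range (n + 1), ((P ∘L R ∘L P ∘L R) ^ i) h₀)
        atTop (nhds l) := by
  classical
  set A : H →L[ℂ] H := P ∘L R ∘L P ∘L R with hA
  -- pointwise facts
  have hR2' : ∀ z, R (R z) = z := by
    intro z
    have := congrArg (fun T : H →L[ℂ] H => T z) hR2
    simpa using this
  have hP2' : ∀ z, P (P z) = P z := by
    intro z
    have := congrArg (fun T : H →L[ℂ] H => T z) hP2
    simpa using this
  have hRadj : ContinuousLinearMap.adjoint R = R :=
    ContinuousLinearMap.isSelfAdjoint_iff'.mp hR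
  have hPadj : ContinuousLinearMap.adjoint P = P :=
    ContinuousLinearMap.isSelfAdjoint_iff'.mp hP
  set U : H →L[ℂ] H := R ∘L P ∘L R with hU
  have hUadj : ContinuousLinearMap.adjoint U = U := by
    rw [hU, ContinuousLinearMap.adjoint_comp, ContinuousLinearMap.adjoint_comp,
      hRadj, hPadj, ContinuousLinearMap.comp_assoc]
  have hU2' : ∀ z, U (U z) = U z := by
    intro z
    simp only [hU, ContinuousLinearMap.comp_apply]
    rw [hR2' (P (R z)), hP2']
  set B : H →L[ℂ] H := P ∘L U with hB
  have hBadj : ContinuousLinearMap.adjoint B = U ∘L P := by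
    rw [hB, ContinuousLinearMap.adjoint_comp, hUadj, hPadj]
  -- norm bounds
  have hPnorm : ∀ x, ‖P x‖ ≤ ‖x‖ := proj_norm_le P hPadj hP2'
  have hUnorm : ∀ x, ‖U x‖ ≤ ‖x‖ := proj_norm_le U hUadj hU2'
  have hBnorm : ∀ x, ‖B x‖ ≤ ‖x‖ := by
    intro x
    simp only [hB, ContinuousLinearMap.comp_apply]
    exact le_trans (hPnorm _) (hUnorm x)
  have hBadjnorm : ∀ x, ‖ContinuousLinearMap.adjoint B x‖ ≤ ‖x‖ := by
    intro x
    rw [hBadj]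
    simp only [ContinuousLinearMap.comp_apply]
    exact le_trans (hUnorm _) (hPnorm x)
  set S : H →L[ℂ] H := ContinuousLinearMap.adjoint B ∘L B with hS
  -- S ∘ U = S pointwise
  have hSapp : ∀ x, S x = U (P (P (U x))) := by
    intro x
    simp only [hS, hBadj]
    simp only [hB, ContinuousLinearMap.comp_apply]
  have hSU : ∀ x, S (U x) = S x := by
    intro x
    rw [hSapp, hSapp, hU2' x]
  -- A^(n+1) x = P (S^n (U x))
  have hApow : ∀ (n : ℕ) (x : H), (A ^ (n + 1)) x = P ((S ^ n) (U x)) := by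
    intro n
    induction n with
    | zero =>
      intro x
      simp only [zero_add, pow_one, pow_zero, ContinuousLinearMap.one_apply, hA, hB, hU, ContinuousLinearMap.comp_apply]
    | succ m ih =>
      intro x
      have h1 : (A ^ (m + 2)) x = (A ^ (m + 1)) (A x) := by
        rw [pow_succ]; rfl
      rw [h1, ih (A x)]
      have hAx : U (A x) = S x := by
        rw [hSapp]
        simp only [hA, hB, hU, ContinuousLinearMap.comp_apply]
        rw [hP2' (R (P (R x)))]
      rw [hAx, ← hSU x]
      have : (S ^ m) (S (U x)) = (S ^ (m + 1)) (U x) := by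
        rw [pow_succ]; rfl
      rw [this]
  obtain ⟨l', hl'⟩ := key B hBnorm hBadjnorm (U k)
  -- partial sums telescope
  have hsum : ∀ n : ℕ, ∑ i ∈ Finset.range (n + 1), ((A) ^ i) h₀ = k - (A ^ (n + 1)) k := by
    intro n
    have hterm : ∀ i : ℕ, (A ^ i) h₀ = (A ^ i) k - (A ^ (i + 1)) k := by
      intro i
      rw [← hk]
      have : ((1 : H →L[ℂ] H) - A) k = k - A k := by
        simp [ContinuousLinearMap.sub_apply]
      rw [this, map_sub]
      have h4 : (A ^ (i + 1)) k = (A ^ i) (A k) := by rw [pow_succ]; rfl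
      rw [h4]
    calc ∑ i ∈ Finset.range (n + 1), (A ^ i) h₀
        = ∑ i ∈ Finset.range (n + 1), ((A ^ i) k - (A ^ (i + 1)) k) := by
          exact Finset.sum_congr rfl fun i _ => hterm i
      _ = (A ^ 0) k - (A ^ (n + 1)) k := Finset.sum_range_sub' (fun i => (A ^ i) k) (n + 1)
      _ = k - (A ^ (n + 1)) k := by rw [pow_zero]; rfl
  refine ⟨k - P l', ?_⟩
  have h2 : Tendsto (fun n : ℕ => (A ^ (n + 1)) k) atTop (nhds (P l')) := by
    have : (fun n : ℕ => (A ^ (n + 1)) k) = fun n => P ((S ^ n) (U k)) := by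
      funext n; exact hApow n k
    rw [this]
    exact (P.continuous.tendsto l').comp hl'
  have h3 : Tendsto (fun n : ℕ => k - (A ^ (n + 1)) k) atTop (nhds (k - P l')) :=
    (tendsto_const_nhds : Tendsto (fun _ : ℕ => k) atTop (nhds k)).sub h2
  simpa only [hsum] using h3
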